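/- Let G be a group acting by homeomorphisms on a nonempty compact Hausdorff space X, and let ν be a regular Borel probability measure on X. Suppose the Poisson map P_ν is isometric, i.e. sup_{s ∈ G} |P_ν(f)(s)| = ‖f‖_∞ for every f ∈ C(X,ℝ). Then every regular Borel probability measure μ on X lies in the weak-* closure of the convex hull of the orbit {s·ν : s ∈ G}; that is, the weak-* closed convex hull of {s·ν : s ∈ G} is the entire set of regular Borel probability measures on X. -/

import Mathlib

open MeasureTheory
open scoped ENNReal

open scoped NNReal BoundedContinuousFunction

section Aux

lemma mem_closure_of_integrals {α : Type*} [TopologicalSpace α] [MeasurableSpace α]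
    [OpensMeasurableSpace α]
    (μ : ProbabilityMeasure α) (S : Set (ProbabilityMeasure α))
    (h : ∀ T : Finset (α →ᵇ ℝ≥0), ∀ ε : ℝ, 0 < ε → ∃ η ∈ S, ∀ f ∈ T,
      |∫ x, (f x : ℝ) ∂(η : Measure α) - ∫ x, (f x : ℝ) ∂(μ : Measure α)| < ε) :
    μ ∈ closure S := by
  set J : ProbabilityMeasure α → ((α →ᵇ ℝ≥0) → ℝ≥0) :=
    fun P f => P.toFiniteMeasure.testAgainstNN f with hJ
  have hind : Topology.IsInducing J := by
    have h1 := (ProbabilityMeasure.toFiniteMeasure_isEmbedding α).toIsInducing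
    have h2 : Topology.IsInducing
        (FiniteMeasure.toWeakDualBCNN : FiniteMeasure α → WeakDual ℝ≥0 (α →ᵇ ℝ≥0)) := ⟨rfl⟩
    have h3 : Topology.IsInducing (fun (ψ : WeakDual ℝ≥0 (α →ᵇ ℝ≥0)) (f : α →ᵇ ℝ≥0) => ψ f) :=
      ⟨rfl⟩
    exact (h3.comp h2).comp h1
  have key : ∀ (P : ProbabilityMeasure α) (f : α →ᵇ ℝ≥0),
      ((J P f : ℝ≥0) : ℝ) = ∫ x, (f x : ℝ) ∂(P : Measure α) := by
    intro P f
    have h0 : J P f = (∫⁻ x, (f x : ℝ≥0∞) ∂(P : Measure α)).toNNReal := rfl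
    rw [h0]
    exact BoundedContinuousFunction.toReal_lintegral_coe_eq_integral f _
  rw [hind.closure_eq_preimage_closure_image S]
  rw [Set.mem_preimage]
  rw [mem_closure_iff_nhds]
  intro U hU
  rw [nhds_pi, Filter.mem_pi] at hU
  obtain ⟨I, hIfin, t, ht, hsub⟩ := hU
  choose ε hε hball using fun f => Metric.mem_nhds_iff.mp (ht f)
  rcases hIfin.toFinset.eq_empty_or_nonempty with hne | hne
  · obtain ⟨η, hηS, -⟩ := h ∅ 1 one_pos
    refine ⟨J η, hsub ?_, Set.mem_image_of_mem J hηS⟩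
    intro f hf
    exact absurd (hIfin.mem_toFinset.mpr hf) (by simp [hne])
  · obtain ⟨f0, hf0, hmin⟩ := hIfin.toFinset.exists_min_image ε hne
    obtain ⟨η, hηS, hηd⟩ := h hIfin.toFinset (ε f0) (hε f0)
    refine ⟨J η, hsub ?_, Set.mem_image_of_mem J hηS⟩
    intro f hf
    have hfF : f ∈ hIfin.toFinset := hIfin.mem_toFinset.mpr hf
    apply hball f
    rw [Metric.mem_ball, NNReal.dist_eq, key, key]
    exact lt_of_lt_of_le (hηd f hfF) (hmin f hfF)

variable {G X : Type*} [Group G] [TopologicalSpace X] [CompactSpace X] [T2Space X]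
    [Nonempty X] [MeasurableSpace X] [BorelSpace X]
    [MulAction G X] [ContinuousConstSMul G X]

lemma integrable_cm (f : C(X, ℝ)) (μ : Measure X) [IsFiniteMeasure μ] : Integrable f μ := by
  exact (BoundedContinuousFunction.integrable μ (BoundedContinuousFunction.mkOfCompact f))

/-- The composed map `x ↦ f (s • x)` as a continuous map. -/
noncomputable def cmSmul (s : G) (f : C(X, ℝ)) : C(X, ℝ) :=
  f.comp ⟨fun x => s • x, continuous_const_smul s⟩

lemma cmSmul_apply (s : G) (f : C(X, ℝ)) (x : X) : cmSmul s f x = f (s • x) := rfl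

lemma integral_le_norm (μ : Measure X) [IsProbabilityMeasure μ] (f : C(X, ℝ)) :
    ∫ x, f x ∂μ ≤ ‖f‖ := by
  calc ∫ x, f x ∂μ ≤ ∫ _, ‖f‖ ∂μ := by
        refine integral_mono (integrable_cm f μ) (integrable_const _) fun x => ?_
        exact (le_abs_self _).trans (f.norm_coe_le_norm x)
  _ = ‖f‖ := by simp

lemma abs_integral_le_norm (μ : Measure X) [IsProbabilityMeasure μ] (f : C(X, ℝ)) :
    |∫ x, f x ∂μ| ≤ ‖f‖ := by
  rw [abs_le]
  refine ⟨?_, integral_le_norm μ f⟩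
  have := integral_le_norm μ (-f)
  simp only [ContinuousMap.coe_neg, Pi.neg_apply, integral_neg, norm_neg] at this
  linarith

lemma integral_le_iSup (ν : ProbabilityMeasure X)
    (hiso : ∀ f : C(X, ℝ), (⨆ s : G, |∫ x, f (s • x) ∂(ν : Measure X)|) = ‖f‖)
    (μ : Measure X) [IsProbabilityMeasure μ] (f : C(X, ℝ)) :
    ∫ x, f x ∂μ ≤ ⨆ s : G, ∫ x, f (s • x) ∂(ν : Measure X) := by
  set g : C(X, ℝ) := f + ContinuousMap.const X ‖f‖ with hg
  have hgx : ∀ x, g x = f x + ‖f‖ := fun x => rfl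
  have hint : ∀ s : G, Integrable (fun x => f (s • x)) (ν : Measure X) :=
    fun s => integrable_cm (cmSmul s f) _
  have h1 : ∀ s : G, ∫ x, g (s • x) ∂(ν : Measure X) = (∫ x, f (s • x) ∂(ν : Measure X)) + ‖f‖ := by
    intro s
    simp only [hgx]
    rw [integral_add (hint s) (integrable_const _)]
    simp
  have h2 : ∀ s : G, 0 ≤ ∫ x, g (s • x) ∂(ν : Measure X) := by
    intro s
    refine integral_nonneg ?_
    intro x
    simp only [Pi.zero_apply, hgx]
    have := (f.norm_coe_le_norm (s • x))
    rw [Real.norm_eq_abs, abs_le] at this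
    linarith [this.1]
  have hbdd : BddAbove (Set.range fun s : G => ∫ x, f (s • x) ∂(ν : Measure X)) := by
    refine ⟨‖f‖, Set.forall_mem_range.mpr fun s => ?_⟩
    have := integral_le_norm (ν : Measure X) (cmSmul s f)
    calc ∫ x, f (s • x) ∂(ν : Measure X) = ∫ x, cmSmul s f x ∂(ν : Measure X) := rfl
      _ ≤ ‖cmSmul s f‖ := this
      _ ≤ ‖f‖ := by
          rw [ContinuousMap.norm_le _ (norm_nonneg f)]
          intro x
          exact f.norm_coe_le_norm _
  have hgiso := hiso g
  have hsup : (⨆ s : G, |∫ x, g (s • x) ∂(ν : Measure X)|)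
      = (⨆ s : G, ∫ x, f (s • x) ∂(ν : Measure X)) + ‖f‖ := by
    have heq : (fun s : G => |∫ x, g (s • x) ∂(ν : Measure X)|)
        = fun s : G => (∫ x, f (s • x) ∂(ν : Measure X)) + ‖f‖ := by
      funext s
      rw [abs_of_nonneg (h2 s), h1 s]
    calc (⨆ s : G, |∫ x, g (s • x) ∂(ν : Measure X)|)
        = ⨆ s : G, ((∫ x, f (s • x) ∂(ν : Measure X)) + ‖f‖) := by rw [heq]
      _ = (⨆ s : G, ∫ x, f (s • x) ∂(ν : Measure X)) + ‖f‖ := (ciSup_add hbdd ‖f‖).symm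
  have hμg : ∫ x, g x ∂μ ≤ ‖g‖ := integral_le_norm μ g
  have hμg' : ∫ x, g x ∂μ = (∫ x, f x ∂μ) + ‖f‖ := by
    simp only [hgx]
    rw [integral_add (integrable_cm f μ) (integrable_const _)]
    simp
  have : (∫ x, f x ∂μ) + ‖f‖ ≤ (⨆ s : G, ∫ x, f (s • x) ∂(ν : Measure X)) + ‖f‖ := by
    rw [← hμg', ← hsup, hgiso]
    exact hμg
  linarith

lemma vec_mem_closure {ι : Type*} [Fintype ι] [DecidableEq ι]
    (ν : ProbabilityMeasure X)
    (hiso : ∀ f : C(X, ℝ), (⨆ s : G, |∫ x, f (s • x) ∂(ν : Measure X)|) = ‖f‖)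
    (μ : ProbabilityMeasure X) (f : ι → C(X, ℝ)) :
    (fun i => ∫ x, f i x ∂(μ : Measure X)) ∈
      closure (convexHull ℝ
        (Set.range fun s : G => fun i => ∫ x, f i (s • x) ∂(ν : Measure X))) := by
  by_contra hv
  obtain ⟨ℓ, u, hu, hvu⟩ := geometric_hahn_banach_closed_point
    ((convex_convexHull ℝ _).closure) isClosed_closure hv
  set a : ι → ℝ := fun i => ℓ (fun j => if i = j then 1 else 0) with ha
  have hℓ : ∀ z : ι → ℝ, ℓ z = ∑ i, z i * a i := by
    intro z
    conv_lhs => rw [pi_eq_sum_univ z]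
    rw [map_sum]
    congr 1
    funext i
    rw [_root_.map_smul]
    simp [smul_eq_mul, ha]
  set F : C(X, ℝ) := ∑ i, a i • f i with hF
  have hFx : ∀ x : X, F x = ∑ i, a i * f i x := by
    intro x
    rw [hF]
    simp [ContinuousMap.sum_apply]
  have hFμ : ∀ (m : Measure X), IsProbabilityMeasure m →
      ∫ x, F x ∂m = ∑ i, a i * ∫ x, f i x ∂m := by
    intro m hm
    simp only [hFx]
    rw [integral_finset_sum _ (fun i _ => ((integrable_cm (f i) m).const_mul (a i)))]
    congr 1
    funext i
    rw [integral_const_mul]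
  have hFμ' : ∫ x, F x ∂(μ : Measure X) = ℓ (fun i => ∫ x, f i x ∂(μ : Measure X)) := by
    rw [hℓ, hFμ _ inferInstance]
    congr 1; funext i; ring
  have hFs : ∀ s : G, ∫ x, F (s • x) ∂(ν : Measure X)
      = ℓ (fun i => ∫ x, f i (s • x) ∂(ν : Measure X)) := by
    intro s
    have : ∀ x, F (s • x) = ∑ i, a i * f i (s • x) := fun x => hFx (s • x)
    simp only [this]
    rw [integral_finset_sum _ (fun i _ => ((show Integrable (fun x => f i (s • x)) (ν : Measure X)
      from integrable_cm (cmSmul s (f i)) _).const_mul (a i)))]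
    rw [hℓ]
    congr 1
    funext i
    rw [integral_const_mul]
    ring
  have hchain : ℓ (fun i => ∫ x, f i x ∂(μ : Measure X))
      ≤ ⨆ s : G, ∫ x, F (s • x) ∂(ν : Measure X) := by
    rw [← hFμ']
    exact integral_le_iSup ν hiso (μ : Measure X) F
  have hle : (⨆ s : G, ∫ x, F (s • x) ∂(ν : Measure X)) ≤ u := by
    refine ciSup_le fun s => ?_
    rw [hFs s]
    exact (hu _ (subset_closure (subset_convexHull ℝ _ (Set.mem_range_self s)))).le
  exact absurd (lt_of_le_of_lt (hchain.trans hle) hvu) (lt_irrefl _)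

end Aux

/-- If the Poisson map `P_ν : C(X,ℝ) → ℓ∞(G)` is isometric, then the weak-* closed convex
hull of the `G`-orbit of `ν` is the whole space of regular Borel probability measures. -/
theorem stmt_1 {G X : Type*} [Group G] [TopologicalSpace X] [CompactSpace X] [T2Space X]
    [Nonempty X] [MeasurableSpace X] [BorelSpace X]
    [MulAction G X] [ContinuousConstSMul G X]
    (ν : ProbabilityMeasure X) (hreg : (ν : Measure X).Regular)
    (hiso : ∀ f : C(X, ℝ), (⨆ s : G, |∫ x, f (s • x) ∂(ν : Measure X)|) = ‖f‖) :
    ∀ μ : ProbabilityMeasure X, (μ : Measure X).Regular →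
      μ ∈ closure {η : ProbabilityMeasure X | ∃ (n : ℕ) (w : Fin n → ℝ≥0∞) (g : Fin n → G),
        (∑ i, w i = 1) ∧
        (η : Measure X) = ∑ i, w i • (ν : Measure X).map (fun y : X => g i • y)} := by
  intro μ _hμ
  apply mem_closure_of_integrals
  intro T ε hε
  classical
  set ι := {f : X →ᵇ ℝ≥0 // f ∈ T} with hι
  set fc : ι → C(X, ℝ) := fun i =>
    ⟨fun x => ((i.1 : X →ᵇ ℝ≥0) x : ℝ), NNReal.continuous_coe.comp i.1.continuous⟩ with hfc
  have hv := vec_mem_closure (ι := ι) ν hiso μ fc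
  rw [Metric.mem_closure_iff] at hv
  obtain ⟨p, hp, hdist⟩ := hv ε hε
  rw [convexHull_eq] at hp
  obtain ⟨κ, t, w, z, hw0, hw1, hz, hcm⟩ := hp
  choose gs hgs using hz
  set n := t.card with hn
  set e : Fin n ≃ {j // j ∈ t} := t.equivFin.symm with he
  set w' : Fin n → ℝ≥0∞ := fun k => ENNReal.ofReal (w (e k)) with hw'
  set g' : Fin n → G := fun k => gs (e k).1 (e k).2 with hg'
  have hmapprob : ∀ k : Fin n,
      IsProbabilityMeasure ((ν : Measure X).map (fun y : X => g' k • y)) := fun k =>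
    Measure.isProbabilityMeasure_map (continuous_const_smul (g' k)).measurable.aemeasurable
  have hsum : ∑ k, w' k = 1 := by
    have h1 : ∑ k : Fin n, w' k = ∑ j : {j // j ∈ t}, ENNReal.ofReal (w j) :=
      Fintype.sum_equiv e _ _ (fun k => rfl)
    rw [h1, Finset.sum_coe_sort t (fun j => ENNReal.ofReal (w j)),
      ← ENNReal.ofReal_sum_of_nonneg hw0, hw1, ENNReal.ofReal_one]
  set m : Measure X := ∑ k, w' k • (ν : Measure X).map (fun y : X => g' k • y) with hm
  have hmprob : IsProbabilityMeasure m := by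
    constructor
    rw [hm, Measure.finset_sum_apply]
    simp only [Measure.smul_apply, smul_eq_mul]
    have huniv : ∀ k : Fin n, ((ν : Measure X).map (fun y : X => g' k • y)) Set.univ = 1 :=
      fun k => (hmapprob k).measure_univ
    simp only [huniv, mul_one]
    exact hsum
  refine ⟨⟨m, hmprob⟩, ⟨n, w', g', hsum, rfl⟩, ?_⟩
  intro f hf
  set i : ι := ⟨f, hf⟩ with hi
  have hfin : ∀ k : Fin n,
      IsFiniteMeasure (w' k • (ν : Measure X).map fun y : X => g' k • y) := by
    intro k
    constructor
    rw [Measure.smul_apply, smul_eq_mul, (hmapprob k).measure_univ, mul_one]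
    exact ENNReal.ofReal_lt_top
  have hηint : ∫ x, (f x : ℝ) ∂(ProbabilityMeasure.toMeasure (⟨m, hmprob⟩ : ProbabilityMeasure X)) = p i := by
    show ∫ x, fc i x ∂m = p i
    have h0 : ∫ x, fc i x ∂m
        = ∑ k, ∫ x, fc i x ∂(w' k • (ν : Measure X).map fun y : X => g' k • y) := by
      refine integral_finset_sum_measure fun k _ => ?_
      haveI := hfin k
      exact integrable_cm (fc i) _
    have h1 : ∀ k : Fin n, ∫ x, fc i x ∂(w' k • (ν : Measure X).map fun y : X => g' k • y)
        = w (e k) * z (e k) i := by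
      intro k
      rw [integral_smul_measure]
      rw [integral_map (continuous_const_smul (g' k)).measurable.aemeasurable
        (fc i).continuous.aestronglyMeasurable]
      have h2 : ∫ x, fc i (g' k • x) ∂(ν : Measure X) = z (e k) i := by
        have := congrFun (hgs (e k).1 (e k).2) i
        exact this
      rw [h2, ENNReal.toReal_ofReal (hw0 _ (e k).2), smul_eq_mul]
    have h3 : p i = ∑ j ∈ t, w j * z j i := by
      rw [← hcm, Finset.centerMass_eq_of_sum_1 _ _ hw1]
      simp [Finset.sum_apply]
    rw [h0, h3]
    simp only [h1]
    rw [← Finset.sum_coe_sort t (fun j => w j * z j i)]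
    exact Fintype.sum_equiv e _ _ (fun k => rfl)
  have hμint : ∫ x, (f x : ℝ) ∂(μ : Measure X) = (fun i' => ∫ x, fc i' x ∂(μ : Measure X)) i := rfl
  rw [hηint, hμint]
  have := dist_le_pi_dist (fun i' => ∫ x, fc i' x ∂(μ : Measure X)) p i
  rw [Real.dist_eq] at this
  calc |p i - (fun i' => ∫ x, fc i' x ∂(μ : Measure X)) i|
      = |(fun i' => ∫ x, fc i' x ∂(μ : Measure X)) i - p i| := abs_sub_comm _ _
    _ ≤ dist (fun i' => ∫ x, fc i' x ∂(μ : Measure X)) p := this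
    _ < ε := hdist
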